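/- Let p ≥ 3 and a ∈ ℝ. The function h_a(x) = |a + √x|^p + |a − √x|^p is convex and nondecreasing on [0, ∞). -/

import Mathlib

open Real

lemma hasDerivAt_signpow {p : ℝ} (hp : 3 ≤ p) (s : ℝ) :
    HasDerivAt (fun s : ℝ => s * |s| ^ (p - 2)) ((p - 1) * |s| ^ (p - 2)) s := by
  rcases ne_or_eq s 0 with hs | rfl
  · have habs : |s| ≠ 0 := abs_ne_zero.2 hs
    have hd : HasDerivAt (fun s : ℝ => |s| ^ (p - 2))
        ((SignType.sign s : ℝ) * (p - 2) * |s| ^ (p - 2 - 1)) s :=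
      (hasDerivAt_abs hs).rpow_const (Or.inl habs)
    have h := (hasDerivAt_id s).fun_mul hd
    refine h.congr_deriv ?_
    symm
    have h1 : s * (SignType.sign s : ℝ) = |s| := by
      rcases hs.lt_or_gt with h | h
      · simp [h, abs_of_neg h]
      · simp [h, abs_of_pos h]
    have h2 : |s| * |s| ^ (p - 2 - 1) = |s| ^ (p - 2) := by
      rw [Real.rpow_sub_one habs]
      field_simp
    calc (p - 1) * |s| ^ (p - 2)
        = 1 * |s| ^ (p - 2) + (p - 2) * (|s| * |s| ^ (p - 2 - 1)) := by rw [h2]; ring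
      _ = 1 * |s| ^ (p - 2) + s * ((SignType.sign s : ℝ) * (p - 2) * |s| ^ (p - 2 - 1)) := by
          rw [show s * ((SignType.sign s : ℝ) * (p - 2) * |s| ^ (p - 2 - 1))
              = (p - 2) * ((s * (SignType.sign s : ℝ)) * |s| ^ (p - 2 - 1)) by ring, h1]
  · have hne : p - 2 ≠ 0 := by linarith
    have hval : (p - 1) * |(0 : ℝ)| ^ (p - 2) = 0 := by
      simp [Real.zero_rpow hne]
    rw [hasDerivAt_iff_tendsto_slope, hval]
    have heq : ∀ s : ℝ, s ≠ 0 → |s| ^ (p - 2) = slope (fun s : ℝ => s * |s| ^ (p - 2)) 0 s := by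
      intro s hs'
      simp only [slope_fun_def, vsub_eq_sub, sub_zero, smul_eq_mul]
      field_simp
      simp
    have hcont : Filter.Tendsto (fun s : ℝ => |s| ^ (p - 2)) (nhds 0) (nhds 0) := by
      have : ContinuousAt (fun s : ℝ => |s| ^ (p - 2)) 0 := by
        exact ContinuousAt.comp (by exact Real.continuousAt_rpow_const |(0:ℝ)| (p-2) (Or.inr (by linarith))) continuous_abs.continuousAt
      simpa [Real.zero_rpow hne] using this.tendsto
    exact Filter.Tendsto.congr' (by filter_upwards [self_mem_nhdsWithin] with s hs using heq s hs)
      (hcont.mono_left nhdsWithin_le_nhds)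

lemma rpow_tangent {q : ℝ} (hq : 1 ≤ q) {v w : ℝ} (hv : 0 ≤ v) (hvw : v ≤ w) :
    w ^ q - v ^ q ≤ q * w ^ (q - 1) * (w - v) := by
  have hw : 0 ≤ w := hv.trans hvw
  rcases eq_or_lt_of_le hw with rfl | hw'
  · have : v = 0 := le_antisymm hvw hv
    subst this
    simp
  · have hb := one_add_mul_self_le_rpow_one_add (s := v / w - 1)
      (by have := div_nonneg hv hw; linarith) hq
    rw [show (1 : ℝ) + (v / w - 1) = v / w by ring] at hb
    rw [Real.div_rpow hv hw] at hb
    have hwq : 0 < w ^ q := Real.rpow_pos_of_pos hw' q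
    have h1 : (1 + q * (v / w - 1)) * w ^ q ≤ v ^ q := by
      calc (1 + q * (v / w - 1)) * w ^ q ≤ v ^ q / w ^ q * w ^ q :=
            mul_le_mul_of_nonneg_right hb hwq.le
        _ = v ^ q := by field_simp
    have h2 : w ^ (q - 1) = w ^ q / w := Real.rpow_sub_one hw'.ne' q
    rw [h2]
    have hwne : w ≠ 0 := hw'.ne'
    have expand : (1 + q * (v / w - 1)) * w ^ q = w ^ q + q * (w ^ q / w) * (v - w) := by
      field_simp
    rw [expand] at h1
    nlinarith [h1]

lemma trapezoid {p : ℝ} (hp : 3 ≤ p) {v t : ℝ} (hv : 0 ≤ v) (ht : 0 ≤ t) :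
    (v + 2 * t) ^ (p - 1) - v ^ (p - 1) ≤ (p - 1) * t * ((v + 2 * t) ^ (p - 2) + v ^ (p - 2)) := by
  set G : ℝ → ℝ := fun t =>
    (p - 1) * t * ((v + 2 * t) ^ (p - 2) + v ^ (p - 2)) - ((v + 2 * t) ^ (p - 1) - v ^ (p - 1))
  suffices h : 0 ≤ G t by simpa [G] using h
  have hG0 : G 0 = 0 := by simp [G]
  have hmono : MonotoneOn G (Set.Ici 0) := by
    apply monotoneOn_of_hasDerivWithinAt_nonneg (f' := fun t =>
      (p - 1) * ((v + 2 * t) ^ (p - 2) + v ^ (p - 2))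
        + (p - 1) * t * ((p - 2) * (v + 2 * t) ^ (p - 3) * 2)
        - (p - 1) * (v + 2 * t) ^ (p - 2) * 2) (convex_Ici 0)
    · -- continuity
      apply Continuous.continuousOn
      have hc : Continuous fun t : ℝ => v + 2 * t := by continuity
      have h1 : Continuous fun t : ℝ => (v + 2 * t) ^ (p - 2) :=
        hc.rpow_const (fun x => Or.inr (by linarith))
      have h2 : Continuous fun t : ℝ => (v + 2 * t) ^ (p - 1) :=
        hc.rpow_const (fun x => Or.inr (by linarith))
      fun_prop
    · rw [interior_Ici]
      intro s hs
      have hs' : (0 : ℝ) < s := hs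
      have hbase : (0 : ℝ) < v + 2 * s := by linarith
      have hlin : HasDerivAt (fun t : ℝ => v + 2 * t) 2 s := by
        simpa using ((hasDerivAt_id s).const_mul 2).const_add v
      have hpow2 : HasDerivAt (fun t : ℝ => (v + 2 * t) ^ (p - 2))
          (2 * (p - 2) * (v + 2 * s) ^ (p - 2 - 1)) s := by
        exact hlin.rpow_const (p := p - 2) (Or.inl hbase.ne')
      have hpow1 : HasDerivAt (fun t : ℝ => (v + 2 * t) ^ (p - 1))
          (2 * (p - 1) * (v + 2 * s) ^ (p - 1 - 1)) s := by
        exact hlin.rpow_const (p := p - 1) (Or.inl hbase.ne')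
      have h1 : HasDerivAt (fun t : ℝ => (p - 1) * t * ((v + 2 * t) ^ (p - 2) + v ^ (p - 2)))
          ((p - 1) * ((v + 2 * s) ^ (p - 2) + v ^ (p - 2))
            + (p - 1) * s * (2 * (p - 2) * (v + 2 * s) ^ (p - 2 - 1))) s := by
        have hmul := (((hasDerivAt_id s).const_mul (p - 1)).fun_mul
          (hpow2.add_const (v ^ (p - 2))))
        refine hmul.congr_deriv ?_
        simp only [id_eq]
        ring
      have hG : HasDerivAt G
          ((p - 1) * ((v + 2 * s) ^ (p - 2) + v ^ (p - 2))
            + (p - 1) * s * (2 * (p - 2) * (v + 2 * s) ^ (p - 2 - 1))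
            - 2 * (p - 1) * (v + 2 * s) ^ (p - 1 - 1)) s :=
        h1.sub (hpow1.sub_const (v ^ (p - 1)))
      have heq : (p - 1) * ((v + 2 * s) ^ (p - 2) + v ^ (p - 2))
            + (p - 1) * s * (2 * (p - 2) * (v + 2 * s) ^ (p - 2 - 1))
            - 2 * (p - 1) * (v + 2 * s) ^ (p - 1 - 1)
          = (p - 1) * ((v + 2 * s) ^ (p - 2) + v ^ (p - 2))
            + (p - 1) * s * ((p - 2) * (v + 2 * s) ^ (p - 3) * 2)
            - (p - 1) * (v + 2 * s) ^ (p - 2) * 2 := by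
        rw [show p - 2 - 1 = p - 3 by ring, show p - 1 - 1 = p - 2 by ring]
        ring
      rw [heq] at hG
      exact hG.hasDerivWithinAt
    · rw [interior_Ici]
      intro s hs
      have hs' : (0 : ℝ) < s := hs
      have hbase : (0 : ℝ) ≤ v + 2 * s := by linarith
      have htan := rpow_tangent (q := p - 2) (by linarith) hv (show v ≤ v + 2 * s by linarith)
      rw [show v + 2 * s - v = 2 * s by ring, show p - 2 - 1 = p - 3 by ring] at htan
      nlinarith [htan, Real.rpow_nonneg hbase (p - 3), hs']
  have := hmono (Set.self_mem_Ici) (Set.mem_Ici.2 ht) ht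
  rw [hG0] at this
  exact this

lemma self_mul_rpow {p : ℝ} (hp : 3 ≤ p) {s : ℝ} (hs : 0 ≤ s) :
    s * s ^ (p - 2) = s ^ (p - 1) := by
  rcases eq_or_lt_of_le hs with rfl | hs'
  · rw [Real.zero_rpow (by linarith : p - 2 ≠ 0), Real.zero_rpow (by linarith : p - 1 ≠ 0),
      mul_zero]
  · rw [show p - 1 = (p - 2) + 1 by ring, Real.rpow_add_one hs'.ne' (p - 2)]
    ring

lemma key_ineq {p : ℝ} (hp : 3 ≤ p) (a t : ℝ) (ht : 0 < t) :
    p * ((a + t) * |a + t| ^ (p - 2) - (a - t) * |a - t| ^ (p - 2))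
      ≤ p * (p - 1) * (|a + t| ^ (p - 2) + |a - t| ^ (p - 2)) * t := by
  have hp0 : (0 : ℝ) ≤ p := by linarith
  rcases le_or_gt 0 (a - t) with h1 | h1
  · -- both nonneg
    have h2 : (0 : ℝ) ≤ a + t := by linarith
    rw [abs_of_nonneg h1, abs_of_nonneg h2]
    have htr := trapezoid hp h1 ht.le
    rw [show a - t + 2 * t = a + t by ring] at htr
    rw [self_mul_rpow hp h2, self_mul_rpow hp h1]
    calc p * ((a + t) ^ (p - 1) - (a - t) ^ (p - 1))
        ≤ p * ((p - 1) * t * ((a + t) ^ (p - 2) + (a - t) ^ (p - 2))) :=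
          mul_le_mul_of_nonneg_left htr hp0
      _ = p * (p - 1) * ((a + t) ^ (p - 2) + (a - t) ^ (p - 2)) * t := by ring
  · rcases le_or_gt 0 (a + t) with h2 | h2
    · -- a - t < 0 ≤ a + t
      rw [abs_of_nonneg h2, abs_of_neg h1]
      have hu : a + t ≤ 2 * t := by linarith
      have hv : -(a - t) ≤ 2 * t := by linarith
      have hA : (0 : ℝ) ≤ (a + t) ^ (p - 2) := Real.rpow_nonneg h2 _
      have hB : (0 : ℝ) ≤ (-(a - t)) ^ (p - 2) := Real.rpow_nonneg (by linarith) _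
      have e1 : (a + t) * (a + t) ^ (p - 2) ≤ 2 * t * (a + t) ^ (p - 2) :=
        mul_le_mul_of_nonneg_right hu hA
      have e2 : -(a - t) * (-(a - t)) ^ (p - 2) ≤ 2 * t * (-(a - t)) ^ (p - 2) :=
        mul_le_mul_of_nonneg_right hv hB
      have hp2 : (2 : ℝ) ≤ p - 1 := by linarith
      nlinarith [mul_nonneg (mul_nonneg hp0 hA) ht.le, mul_nonneg (mul_nonneg hp0 hB) ht.le,
        mul_le_mul_of_nonneg_left e1 hp0, mul_le_mul_of_nonneg_left e2 hp0]
    · -- a + t < 0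
      have h3 : (0 : ℝ) ≤ -(a + t) := by linarith
      rw [abs_of_neg h2, abs_of_neg h1]
      have htr := trapezoid hp h3 ht.le
      rw [show -(a + t) + 2 * t = -(a - t) by ring] at htr
      have e1 : -(a + t) * (-(a + t)) ^ (p - 2) = (-(a + t)) ^ (p - 1) := self_mul_rpow hp h3
      have e2 : -(a - t) * (-(a - t)) ^ (p - 2) = (-(a - t)) ^ (p - 1) :=
        self_mul_rpow hp (by linarith)
      have g1 : (a + t) * (-(a + t)) ^ (p - 2) = -((-(a + t)) ^ (p - 1)) := by rw [← e1]; ring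
      have g2 : (a - t) * (-(a - t)) ^ (p - 2) = -((-(a - t)) ^ (p - 1)) := by rw [← e2]; ring
      rw [g1, g2]
      calc p * (-((-(a + t)) ^ (p - 1)) - -((-(a - t)) ^ (p - 1)))
          = p * ((-(a - t)) ^ (p - 1) - (-(a + t)) ^ (p - 1)) := by ring
        _ ≤ p * ((p - 1) * t * ((-(a - t)) ^ (p - 2) + (-(a + t)) ^ (p - 2))) :=
            mul_le_mul_of_nonneg_left htr hp0
        _ = p * (p - 1) * ((-(a + t)) ^ (p - 2) + (-(a - t)) ^ (p - 2)) * t := by ring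

theorem stmt_8 (p a : ℝ) (hp : 3 ≤ p) :
    ConvexOn ℝ (Set.Ici 0) (fun x : ℝ => |a + Real.sqrt x| ^ p + |a - Real.sqrt x| ^ p)
    ∧ MonotoneOn (fun x : ℝ => |a + Real.sqrt x| ^ p + |a - Real.sqrt x| ^ p) (Set.Ici 0) := by
  have hp1 : (1 : ℝ) < p := by linarith
  have hp0 : (0 : ℝ) ≤ p := by linarith
  have mφ : Monotone (fun s : ℝ => s * |s| ^ (p - 2)) := by
    apply monotone_of_deriv_nonneg
    · exact fun s => (hasDerivAt_signpow hp s).differentiableAt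
    · intro s
      rw [(hasDerivAt_signpow hp s).deriv]
      exact mul_nonneg (by linarith) (Real.rpow_nonneg (abs_nonneg s) _)
  have hcont : ContinuousOn (fun x : ℝ => |a + Real.sqrt x| ^ p + |a - Real.sqrt x| ^ p)
      (Set.Ici 0) := by
    apply Continuous.continuousOn
    have hc1 : Continuous fun x : ℝ => |a + Real.sqrt x| ^ p :=
      ((continuous_const.add Real.continuous_sqrt).abs).rpow_const (fun x => Or.inr (by linarith))
    have hc2 : Continuous fun x : ℝ => |a - Real.sqrt x| ^ p :=
      ((continuous_const.sub Real.continuous_sqrt).abs).rpow_const (fun x => Or.inr (by linarith))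
    exact hc1.add hc2
  have hderiv : ∀ x ∈ interior (Set.Ici (0 : ℝ)),
      HasDerivAt (fun x : ℝ => |a + Real.sqrt x| ^ p + |a - Real.sqrt x| ^ p)
        ((p * ((a + Real.sqrt x) * |a + Real.sqrt x| ^ (p - 2))
          - p * ((a - Real.sqrt x) * |a - Real.sqrt x| ^ (p - 2))) * (2 * Real.sqrt x)⁻¹) x := by
    rw [interior_Ici]
    intro x hx
    have hx' : (0 : ℝ) < x := hx
    have hsq : HasDerivAt Real.sqrt (1 / (2 * Real.sqrt x)) x := Real.hasDerivAt_sqrt hx'.ne'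
    have h1 : HasDerivAt (fun x : ℝ => a + Real.sqrt x) (1 / (2 * Real.sqrt x)) x :=
      hsq.const_add a
    have h2 : HasDerivAt (fun x : ℝ => a - Real.sqrt x) (-(1 / (2 * Real.sqrt x))) x :=
      hsq.const_sub a
    have hu : HasDerivAt (fun x : ℝ => |a + Real.sqrt x| ^ p)
        ((p * |a + Real.sqrt x| ^ (p - 2) * (a + Real.sqrt x)) * (1 / (2 * Real.sqrt x))) x :=
      by have := (hasDerivAt_abs_rpow (a + Real.sqrt x) hp1).comp x h1; exact this
    have hv : HasDerivAt (fun x : ℝ => |a - Real.sqrt x| ^ p)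
        ((p * |a - Real.sqrt x| ^ (p - 2) * (a - Real.sqrt x)) * (-(1 / (2 * Real.sqrt x)))) x :=
      by have := (hasDerivAt_abs_rpow (a - Real.sqrt x) hp1).comp x h2; exact this
    refine (hu.fun_add hv).congr_deriv ?_
    ring
  have hderiv2 : ∀ x ∈ interior (Set.Ici (0 : ℝ)),
      HasDerivAt (fun x : ℝ =>
        (p * ((a + Real.sqrt x) * |a + Real.sqrt x| ^ (p - 2))
          - p * ((a - Real.sqrt x) * |a - Real.sqrt x| ^ (p - 2))) * (2 * Real.sqrt x)⁻¹)
        ((p * ((p - 1) * |a + Real.sqrt x| ^ (p - 2) * (1 / (2 * Real.sqrt x)))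
          - p * ((p - 1) * |a - Real.sqrt x| ^ (p - 2) * (-(1 / (2 * Real.sqrt x)))))
            * (2 * Real.sqrt x)⁻¹
          + (p * ((a + Real.sqrt x) * |a + Real.sqrt x| ^ (p - 2))
            - p * ((a - Real.sqrt x) * |a - Real.sqrt x| ^ (p - 2)))
            * (-(2 * (1 / (2 * Real.sqrt x))) / (2 * Real.sqrt x) ^ 2)) x := by
    rw [interior_Ici]
    intro x hx
    have hx' : (0 : ℝ) < x := hx
    have ht : (0 : ℝ) < Real.sqrt x := Real.sqrt_pos.2 hx'
    have hsq : HasDerivAt Real.sqrt (1 / (2 * Real.sqrt x)) x := Real.hasDerivAt_sqrt hx'.ne'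
    have h1 : HasDerivAt (fun x : ℝ => a + Real.sqrt x) (1 / (2 * Real.sqrt x)) x :=
      hsq.const_add a
    have h2 : HasDerivAt (fun x : ℝ => a - Real.sqrt x) (-(1 / (2 * Real.sqrt x))) x :=
      hsq.const_sub a
    have hφu : HasDerivAt (fun x : ℝ => (a + Real.sqrt x) * |a + Real.sqrt x| ^ (p - 2))
        ((p - 1) * |a + Real.sqrt x| ^ (p - 2) * (1 / (2 * Real.sqrt x))) x :=
      by have := (hasDerivAt_signpow hp (a + Real.sqrt x)).comp x h1; exact this
    have hφv : HasDerivAt (fun x : ℝ => (a - Real.sqrt x) * |a - Real.sqrt x| ^ (p - 2))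
        ((p - 1) * |a - Real.sqrt x| ^ (p - 2) * (-(1 / (2 * Real.sqrt x)))) x :=
      by have := (hasDerivAt_signpow hp (a - Real.sqrt x)).comp x h2; exact this
    have hN : HasDerivAt (fun x : ℝ =>
        p * ((a + Real.sqrt x) * |a + Real.sqrt x| ^ (p - 2))
          - p * ((a - Real.sqrt x) * |a - Real.sqrt x| ^ (p - 2)))
        (p * ((p - 1) * |a + Real.sqrt x| ^ (p - 2) * (1 / (2 * Real.sqrt x)))
          - p * ((p - 1) * |a - Real.sqrt x| ^ (p - 2) * (-(1 / (2 * Real.sqrt x))))) x :=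
      (hφu.const_mul p).sub (hφv.const_mul p)
    have hinv : HasDerivAt (fun x : ℝ => (2 * Real.sqrt x)⁻¹)
        (-(2 * (1 / (2 * Real.sqrt x))) / (2 * Real.sqrt x) ^ 2) x :=
      (hsq.const_mul 2).inv (mul_pos two_pos ht).ne'
    exact hN.mul hinv
  have hF1nonneg : ∀ x ∈ interior (Set.Ici (0 : ℝ)),
      0 ≤ (p * ((a + Real.sqrt x) * |a + Real.sqrt x| ^ (p - 2))
        - p * ((a - Real.sqrt x) * |a - Real.sqrt x| ^ (p - 2))) * (2 * Real.sqrt x)⁻¹ := by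
    rw [interior_Ici]
    intro x hx
    have hx' : (0 : ℝ) < x := hx
    have ht : (0 : ℝ) < Real.sqrt x := Real.sqrt_pos.2 hx'
    have hm : (a - Real.sqrt x) * |a - Real.sqrt x| ^ (p - 2)
        ≤ (a + Real.sqrt x) * |a + Real.sqrt x| ^ (p - 2) := mφ (by linarith)
    apply mul_nonneg
    · have := mul_le_mul_of_nonneg_left hm hp0
      linarith
    · positivity
  have hF2nonneg : ∀ x ∈ interior (Set.Ici (0 : ℝ)),
      0 ≤ (p * ((p - 1) * |a + Real.sqrt x| ^ (p - 2) * (1 / (2 * Real.sqrt x)))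
          - p * ((p - 1) * |a - Real.sqrt x| ^ (p - 2) * (-(1 / (2 * Real.sqrt x)))))
            * (2 * Real.sqrt x)⁻¹
          + (p * ((a + Real.sqrt x) * |a + Real.sqrt x| ^ (p - 2))
            - p * ((a - Real.sqrt x) * |a - Real.sqrt x| ^ (p - 2)))
            * (-(2 * (1 / (2 * Real.sqrt x))) / (2 * Real.sqrt x) ^ 2) := by
    rw [interior_Ici]
    intro x hx
    have hx' : (0 : ℝ) < x := hx
    set t := Real.sqrt x with htdef
    have ht : (0 : ℝ) < t := Real.sqrt_pos.2 hx'
    have hkey := key_ineq hp a t ht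
    have hexpr : (p * ((p - 1) * |a + t| ^ (p - 2) * (1 / (2 * t)))
          - p * ((p - 1) * |a - t| ^ (p - 2) * (-(1 / (2 * t))))) * (2 * t)⁻¹
          + (p * ((a + t) * |a + t| ^ (p - 2)) - p * ((a - t) * |a - t| ^ (p - 2)))
            * (-(2 * (1 / (2 * t))) / (2 * t) ^ 2)
        = (p * (p - 1) * (|a + t| ^ (p - 2) + |a - t| ^ (p - 2)) * t
            - p * ((a + t) * |a + t| ^ (p - 2) - (a - t) * |a - t| ^ (p - 2))) / (4 * t ^ 3) := by
      field_simp
      ring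
    rw [hexpr]
    apply div_nonneg (by linarith) (by positivity)
  constructor
  · exact convexOn_of_hasDerivWithinAt2_nonneg (convex_Ici 0) hcont
      (by rw [interior_Ici] at *; exact fun x hx => ((hderiv x hx).hasDerivWithinAt))
      (by rw [interior_Ici] at *; exact fun x hx => ((hderiv2 x hx).hasDerivWithinAt))
      hF2nonneg
  · exact monotoneOn_of_hasDerivWithinAt_nonneg (convex_Ici 0) hcont
      (fun x hx => (hderiv x hx).hasDerivWithinAt) hF1nonneg
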